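/- Abstract saddle-point stability: let H, Q be real Hilbert spaces, a : H × H → ℝ a bounded bilinear form coercive with constant c_a on the kernel V of a bounded bilinear form b : H × Q → ℝ satisfying the inf-sup condition with constant β > 0. Then for any bounded linear functionals F ∈ H', G ∈ Q', the solution (σ, u) of a(σ,τ) + b(τ,u) = F(τ), b(σ,v) = G(v) satisfies ‖σ‖ ≤ (1/c_a + 1/β)(1 + ‖a‖/c_a)(‖F‖ + ‖G‖) — in particular, the solution depends continuously on data with constants depending only on c_a, β, ‖a‖. -/

import Mathlib

open InnerProductSpace RealInnerProductSpace

/-- Riesz-type solver for the inf-sup condition: there exists `σg` with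
`b σg v = G v` for all `v` and `‖σg‖ ≤ ‖G‖ / β`. -/
theorem exists_lift_of_infsup
    {H Q : Type*}
    [NormedAddCommGroup H] [InnerProductSpace ℝ H] [CompleteSpace H]
    [NormedAddCommGroup Q] [InnerProductSpace ℝ Q] [CompleteSpace Q]
    (b : H →L[ℝ] Q →L[ℝ] ℝ) (β : ℝ) (hβ : 0 < β)
    (hinfsup : ∀ v : Q, β * ‖v‖ ≤ ‖b.flip v‖) (G : Q →L[ℝ] ℝ) :
    ∃ σg : H, (∀ v : Q, b σg v = G v) ∧ ‖σg‖ ≤ ‖G‖ / β := by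
  -- Riesz representative of `b.flip v`
  set T : Q → H := fun v => (toDual ℝ H).symm (b.flip v) with hT
  have hTinner : ∀ (v : Q) (τ : H), ⟪T v, τ⟫ = b τ v := by
    intro v τ
    simp [hT, toDual_symm_apply]
  have hTnorm : ∀ v : Q, ‖T v‖ = ‖b.flip v‖ := by
    intro v; simp [hT]
  -- bundle T as a continuous linear map
  have hTadd : ∀ v w : Q, T (v + w) = T v + T w := by
    intro v w; simp [hT, map_add]
  have hTsmul : ∀ (r : ℝ) (v : Q), T (r • v) = r • T v := by
    intro r v
    simp [hT, map_smul]
  let Tc : Q →L[ℝ] H :=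
    { toFun := T
      map_add' := hTadd
      map_smul' := hTsmul
      cont := by
        show Continuous T
        rw [hT]
        exact ((toDual ℝ H).symm.continuous).comp b.flip.continuous }
  -- the coercive bilinear form B v w = ⟪T v, T w⟫
  let B : Q →L[ℝ] Q →L[ℝ] ℝ :=
    ((ContinuousLinearMap.compL ℝ Q H ℝ).flip Tc).comp b.flip
  have hBapply : ∀ v w : Q, B v w = ⟪T v, T w⟫ := by
    intro v w
    have : B v w = b (Tc w) v := rfl
    rw [this, ← hTinner v (Tc w)]
    rfl
  have hcoB : IsCoercive B := by
    refine ⟨β ^ 2, by positivity, fun v => ?_⟩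
    have h1 : β * ‖v‖ ≤ ‖T v‖ := by rw [hTnorm]; exact hinfsup v
    have h2 : B v v = ‖T v‖ ^ 2 := by
      rw [hBapply, real_inner_self_eq_norm_sq]
    rw [h2]
    have hb : 0 ≤ β * ‖v‖ := by positivity
    nlinarith [norm_nonneg (T v), norm_nonneg v]
  -- Lax–Milgram solution
  set g : Q := (toDual ℝ Q).symm G with hg
  set w : Q := hcoB.continuousLinearEquivOfBilin.symm g with hw
  have hBw : ∀ v : Q, B w v = G v := by
    intro v
    have := hcoB.continuousLinearEquivOfBilin_apply w v
    rw [hw, ContinuousLinearEquiv.apply_symm_apply] at this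
    rw [← this, hg, toDual_symm_apply]
  refine ⟨T w, ?_, ?_⟩
  · intro v
    rw [← hTinner v (T w), real_inner_comm, ← hBapply, hBw]
  · -- ‖T w‖² = B w w = G w ≤ ‖G‖ ‖w‖ ≤ ‖G‖ ‖T w‖ / β
    have h1 : ‖T w‖ ^ 2 = G w := by
      rw [← hBw w, hBapply, real_inner_self_eq_norm_sq]
    have h2 : G w ≤ ‖G‖ * ‖w‖ := by
      calc G w ≤ |G w| := le_abs_self _
        _ = ‖G w‖ := rfl
        _ ≤ ‖G‖ * ‖w‖ := G.le_opNorm w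
    have h3 : β * ‖w‖ ≤ ‖T w‖ := by rw [hTnorm]; exact hinfsup w
    have h4 : 0 ≤ ‖G‖ := norm_nonneg _
    rcases eq_or_lt_of_le (norm_nonneg (T w)) with h0 | h0
    · rw [← h0]; positivity
    · rw [div_eq_mul_inv, ← mul_le_mul_iff_of_pos_right h0, ← sq]
      rw [h1]
      calc G w ≤ ‖G‖ * ‖w‖ := h2
        _ ≤ ‖G‖ * β⁻¹ * ‖T w‖ := by
            rw [mul_assoc]
            apply mul_le_mul_of_nonneg_left _ h4
            rw [← le_div_iff₀' hβ] at h3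
            rwa [div_eq_inv_mul] at h3

/-- Abstract saddle-point stability (Babuška–Brezzi): if `a` is a bounded bilinear form
coercive with constant `c_a` on the kernel of a bounded bilinear form `b`, and `b`
satisfies an inf-sup condition with constant `β > 0`, then the solution `(σ, u)` of
`a(σ,τ) + b(τ,u) = F(τ)`, `b(σ,v) = G(v)` satisfies
`‖σ‖ ≤ (1/c_a + 1/β)(1 + ‖a‖/c_a)(‖F‖ + ‖G‖)`. -/
theorem saddle_point_stability
    {H Q : Type*}
    [NormedAddCommGroup H] [InnerProductSpace ℝ H] [CompleteSpace H]
    [NormedAddCommGroup Q] [InnerProductSpace ℝ Q] [CompleteSpace Q]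
    (a : H →L[ℝ] H →L[ℝ] ℝ) (b : H →L[ℝ] Q →L[ℝ] ℝ)
    (c_a β : ℝ) (hca : 0 < c_a) (hβ : 0 < β)
    (hcoer : ∀ τ : H, (∀ v : Q, b τ v = 0) → c_a * ‖τ‖ ^ 2 ≤ a τ τ)
    (hinfsup : ∀ v : Q, β * ‖v‖ ≤ ‖b.flip v‖)
    (F : H →L[ℝ] ℝ) (G : Q →L[ℝ] ℝ)
    (σ : H) (u : Q)
    (heq1 : ∀ τ : H, a σ τ + b τ u = F τ)
    (heq2 : ∀ v : Q, b σ v = G v) :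
    ‖σ‖ ≤ (1 / c_a + 1 / β) * (1 + ‖a‖ / c_a) * (‖F‖ + ‖G‖) := by
  obtain ⟨σg, hσg, hσgnorm⟩ := exists_lift_of_infsup b β hβ hinfsup G
  set τ0 : H := σ - σg with hτ0
  have hker : ∀ v : Q, b τ0 v = 0 := by
    intro v
    simp [hτ0, map_sub, heq2 v, hσg v]
  -- coercivity estimate
  have key : c_a * ‖τ0‖ ^ 2 ≤ (‖F‖ + ‖a‖ * ‖σg‖) * ‖τ0‖ := by
    have h1 : c_a * ‖τ0‖ ^ 2 ≤ a τ0 τ0 := hcoer τ0 hker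
    have hb0 : b τ0 u = 0 := hker u
    have h2 : a τ0 τ0 = F τ0 - a σg τ0 := by
      have := heq1 τ0
      rw [hb0, add_zero] at this
      simp only [hτ0, map_sub, ContinuousLinearMap.sub_apply] at this ⊢
      linarith
    have h3 : F τ0 ≤ ‖F‖ * ‖τ0‖ := by
      calc F τ0 ≤ |F τ0| := le_abs_self _
        _ = ‖F τ0‖ := rfl
        _ ≤ ‖F‖ * ‖τ0‖ := F.le_opNorm τ0
    have h4 : -(a σg τ0) ≤ ‖a‖ * ‖σg‖ * ‖τ0‖ := by
      calc -(a σg τ0) ≤ |a σg τ0| := neg_le_abs _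
        _ = ‖a σg τ0‖ := rfl
        _ ≤ ‖a σg‖ * ‖τ0‖ := (a σg).le_opNorm τ0
        _ ≤ ‖a‖ * ‖σg‖ * ‖τ0‖ :=
            mul_le_mul_of_nonneg_right (a.le_opNorm σg) (norm_nonneg _)
    calc c_a * ‖τ0‖ ^ 2 ≤ a τ0 τ0 := h1
      _ = F τ0 - a σg τ0 := h2
      _ ≤ ‖F‖ * ‖τ0‖ + ‖a‖ * ‖σg‖ * ‖τ0‖ := by linarith
      _ = (‖F‖ + ‖a‖ * ‖σg‖) * ‖τ0‖ := by ring
  have hτ0norm : ‖τ0‖ ≤ (‖F‖ + ‖a‖ * ‖σg‖) / c_a := by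
    rcases eq_or_lt_of_le (norm_nonneg τ0) with h0 | h0
    · rw [← h0]
      have : 0 ≤ ‖F‖ + ‖a‖ * ‖σg‖ := by positivity
      positivity
    · rw [le_div_iff₀ hca]
      have := key
      rw [sq] at this
      calc ‖τ0‖ * c_a = c_a * ‖τ0‖ := by ring
        _ ≤ ‖F‖ + ‖a‖ * ‖σg‖ := by
            rw [← mul_le_mul_iff_of_pos_right h0] at *
            nlinarith
  have htri : ‖σ‖ ≤ ‖τ0‖ + ‖σg‖ := by
    have : σ = τ0 + σg := by rw [hτ0]; abel
    rw [this]; exact norm_add_le _ _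
  have hσgG : ‖σg‖ ≤ ‖G‖ / β := hσgnorm
  have hF : (0:ℝ) ≤ ‖F‖ := norm_nonneg _
  have hG : (0:ℝ) ≤ ‖G‖ := norm_nonneg _
  have ha : (0:ℝ) ≤ ‖a‖ := a.opNorm_nonneg
  have hsg : (0:ℝ) ≤ ‖σg‖ := norm_nonneg _
  have hbound : ‖σ‖ ≤ ‖F‖ / c_a + (1 + ‖a‖ / c_a) * (‖G‖ / β) := by
    have h5 : ‖τ0‖ + ‖σg‖ ≤ (‖F‖ + ‖a‖ * ‖σg‖) / c_a + ‖σg‖ := by linarith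
    have h6 : (‖F‖ + ‖a‖ * ‖σg‖) / c_a + ‖σg‖ = ‖F‖ / c_a + (1 + ‖a‖ / c_a) * ‖σg‖ := by
      field_simp; ring
    have h7 : (1 + ‖a‖ / c_a) * ‖σg‖ ≤ (1 + ‖a‖ / c_a) * (‖G‖ / β) := by
      apply mul_le_mul_of_nonneg_left hσgG
      positivity
    linarith
  refine hbound.trans ?_
  have hA : (0:ℝ) ≤ ‖a‖ / c_a := by positivity
  have e1 : ‖F‖ / c_a ≤ 1 / c_a * (1 + ‖a‖ / c_a) * (‖F‖ + ‖G‖) := by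
    rw [div_eq_mul_inv, mul_comm]
    have : (1:ℝ) * ‖F‖ ≤ (1 + ‖a‖ / c_a) * (‖F‖ + ‖G‖) := by nlinarith
    calc c_a⁻¹ * ‖F‖ = 1 / c_a * (1 * ‖F‖) := by field_simp
      _ ≤ 1 / c_a * ((1 + ‖a‖ / c_a) * (‖F‖ + ‖G‖)) := by
          apply mul_le_mul_of_nonneg_left this; positivity
      _ = 1 / c_a * (1 + ‖a‖ / c_a) * (‖F‖ + ‖G‖) := by ring
  have e2 : (1 + ‖a‖ / c_a) * (‖G‖ / β) ≤ 1 / β * (1 + ‖a‖ / c_a) * (‖F‖ + ‖G‖) := by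
    have : ‖G‖ ≤ ‖F‖ + ‖G‖ := by linarith
    calc (1 + ‖a‖ / c_a) * (‖G‖ / β) = 1 / β * ((1 + ‖a‖ / c_a) * ‖G‖) := by ring
      _ ≤ 1 / β * ((1 + ‖a‖ / c_a) * (‖F‖ + ‖G‖)) := by
          apply mul_le_mul_of_nonneg_left _ (by positivity)
          apply mul_le_mul_of_nonneg_left this (by positivity)
      _ = 1 / β * (1 + ‖a‖ / c_a) * (‖F‖ + ‖G‖) := by ring
  calc ‖F‖ / c_a + (1 + ‖a‖ / c_a) * (‖G‖ / β)
      ≤ 1 / c_a * (1 + ‖a‖ / c_a) * (‖F‖ + ‖G‖) + 1 / β * (1 + ‖a‖ / c_a) * (‖F‖ + ‖G‖) := by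
        linarith
    _ = (1 / c_a + 1 / β) * (1 + ‖a‖ / c_a) * (‖F‖ + ‖G‖) := by ring
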